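/- For all φ, ψ ∈ Aut(F_n) and all v ∈ H: τ₁(φ ψ)(v) = τ₁(φ)(v) + (|φ| ⊗ |φ|)(τ₁(ψ)(|φ|⁻¹(v))). In other words, τ₁ is a 1-cocycle on Aut(F_n) with values in the additive group of additive maps H → H ⊗_ℤ H, for the action φ · u := (|φ| ⊗ |φ|) ∘ u ∘ |φ|⁻¹. -/

import Mathlib

noncomputable section
open scoped TensorProduct


/-- `H = Fin n →₀ ℤ`, the first integral homology of the free group. -/
abbrev Hz (n : ℕ) : Type := Fin n →₀ ℤ

/-- The standard basis vector `X i`. -/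
def Xz (n : ℕ) (i : Fin n) : Hz n := Finsupp.single i 1

/-- `H ⊗ℤ H`. -/
abbrev HHz (n : ℕ) : Type := Hz n ⊗[ℤ] Hz n

/-- The degree ≤ 2 truncation of the Magnus algebra: underlying set `H × (H ⊗ H)`,
with multiplication `(u,s)·(u',s') = (u+u', s+s'+u⊗u')`. -/
def Mn (n : ℕ) : Type := Hz n × HHz n

namespace Mn

variable {n : ℕ}

instance : Group (Mn n) where
  mul a b := (a.1 + b.1, a.2 + b.2 + a.1 ⊗ₜ[ℤ] b.1)
  one := ((0 : Hz n), (0 : HHz n))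
  inv a := (-a.1, -a.2 + a.1 ⊗ₜ[ℤ] a.1)
  mul_assoc a b c := by
    show (_, _) = (_, _)
    refine Prod.ext (add_assoc _ _ _) ?_
    show a.2 + b.2 + a.1 ⊗ₜ[ℤ] b.1 + c.2 + (a.1 + b.1) ⊗ₜ[ℤ] c.1
        = a.2 + (b.2 + c.2 + b.1 ⊗ₜ[ℤ] c.1) + a.1 ⊗ₜ[ℤ] (b.1 + c.1)
    rw [TensorProduct.add_tmul, TensorProduct.tmul_add]
    abel
  one_mul a := by
    show ((0 : Hz n) + a.1, (0 : HHz n) + a.2 + (0 : Hz n) ⊗ₜ[ℤ] a.1) = a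
    rw [TensorProduct.zero_tmul]
    simp
    exact rfl
  mul_one a := by
    show (a.1 + 0, a.2 + (0:HHz n) + a.1 ⊗ₜ[ℤ] (0 : Hz n)) = a
    rw [TensorProduct.tmul_zero]
    simp
    exact rfl
  inv_mul_cancel a := by
    show (-a.1 + a.1, (-a.2 + a.1 ⊗ₜ[ℤ] a.1) + a.2 + (-a.1) ⊗ₜ[ℤ] a.1) = ((0:Hz n), (0:HHz n))
    rw [TensorProduct.neg_tmul]
    refine Prod.ext (by simp) ?_
    show _ = (0 : HHz n)
    abel

end Mn

/-- The truncated standard Magnus expansion `Θ : F_n →* M_n`, `x_i ↦ (X_i, 0)`. -/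
def Theta (n : ℕ) : FreeGroup (Fin n) →* Mn n :=
  FreeGroup.lift fun i => ((Xz n i, 0) : Mn n)

/-- The abelianization map `a : F_n → H`, the first component of `Θ`. -/
def aMap (n : ℕ) (γ : FreeGroup (Fin n)) : Hz n := (Theta n γ).1

/-- `θ₂`, the second component of the truncated Magnus expansion. -/
def theta2 (n : ℕ) (γ : FreeGroup (Fin n)) : HHz n := (Theta n γ).2



/-- `aMap` packaged as a monoid hom into `Multiplicative`. -/
def aHom (n : ℕ) : FreeGroup (Fin n) →* Multiplicative (Hz n) where
  toFun γ := Multiplicative.ofAdd (aMap n γ)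
  map_one' := by
    simp only [aMap, map_one]
    rfl
  map_mul' γ δ := by
    simp only [aMap, map_mul]
    rfl

lemma aMap_mul {n : ℕ} (γ δ : FreeGroup (Fin n)) :
    aMap n (γ * δ) = aMap n γ + aMap n δ := by
  simp only [aMap, map_mul]; rfl

lemma aMap_zpow {n : ℕ} (γ : FreeGroup (Fin n)) (b : ℤ) :
    aMap n (γ ^ b) = b • aMap n γ := by
  have := map_zpow (aHom n) γ b
  have h2 : aHom n (γ ^ b) = Multiplicative.ofAdd (aMap n (γ ^ b)) := rfl
  rw [h2] at this
  have := congrArg Multiplicative.toAdd this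
  simp at this
  exact this

lemma aMap_of {n : ℕ} (i : Fin n) : aMap n (FreeGroup.of i) = Xz n i := by
  have h : Theta n (FreeGroup.of i) = ((Xz n i, 0) : Mn n) :=
    FreeGroup.lift_apply_of (β := Mn n) (f := fun i => ((Xz n i, 0) : Mn n))
  unfold aMap
  rw [h]

lemma aMap_surj (n : ℕ) (v : Hz n) : ∃ γ : FreeGroup (Fin n), aMap n γ = v := by
  induction v using Finsupp.induction with
  | zero => exact ⟨1, by simp only [aMap, map_one]; rfl⟩
  | single_add i b f _ _ ih =>
    obtain ⟨γ, hγ⟩ := ih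
    refine ⟨FreeGroup.of i ^ b * γ, ?_⟩
    rw [aMap_mul, aMap_zpow, hγ, aMap_of]
    simp [Xz, Finsupp.smul_single]

theorem stmt13 (n : ℕ) (hn : 2 ≤ n)
    (Φ : MulAut (FreeGroup (Fin n)) → (Hz n →+ Hz n))
    (hΦ : ∀ (φ : MulAut (FreeGroup (Fin n))) (γ : FreeGroup (Fin n)),
      Φ φ (aMap n γ) = aMap n (φ γ))
    (τ : MulAut (FreeGroup (Fin n)) → (Hz n →+ HHz n))
    (hτ : ∀ (φ : MulAut (FreeGroup (Fin n))) (γ : FreeGroup (Fin n)),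
      τ φ (aMap n γ) = theta2 n γ -
        (TensorProduct.map (Φ φ).toIntLinearMap (Φ φ).toIntLinearMap)
          (theta2 n (φ⁻¹ γ)))
 :
    ∀ (φ ψ : MulAut (FreeGroup (Fin n))) (v : Hz n),
      τ (φ * ψ) v = τ φ v +
        (TensorProduct.map (Φ φ).toIntLinearMap (Φ φ).toIntLinearMap)
          (τ ψ (Φ φ⁻¹ v)) := by
  intro φ ψ v
  obtain ⟨γ, rfl⟩ := aMap_surj n v
  have h1 : Φ φ⁻¹ (aMap n γ) = aMap n (φ⁻¹ γ) := hΦ φ⁻¹ γ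
  have hcomp : (Φ (φ * ψ)).toIntLinearMap
      = (Φ φ).toIntLinearMap ∘ₗ (Φ ψ).toIntLinearMap := by
    apply LinearMap.ext; intro w
    obtain ⟨δ, rfl⟩ := aMap_surj n w
    show Φ (φ * ψ) (aMap n δ) = Φ φ (Φ ψ (aMap n δ))
    rw [hΦ, hΦ, hΦ, MulAut.mul_apply]
  have hmulinv : (φ * ψ)⁻¹ γ = ψ⁻¹ (φ⁻¹ γ) := by
    rw [mul_inv_rev]; rfl
  rw [hτ, h1, hτ, hτ, hcomp, TensorProduct.map_comp, hmulinv]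
  simp only [LinearMap.comp_apply, map_sub]
  abel
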